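/- If k < h, or if k = h and j ≠ i, then χ_k^{(j)} ∘ φ_h^{(i)} = χ_k^{(j)} on [0,1). -/
import Mathlib

open MeasureTheory Set

/-- The Haar function `χ_k^{(j)}` on `[0,1)`. -/
noncomputable def haar (k j : ℕ) (t : ℝ) : ℝ :=
  if ((2*j:ℝ)-2)/2^k ≤ t ∧ t < ((2*j:ℝ)-1)/2^k then (2:ℝ) ^ (((k:ℝ)-1)/2)
  else if ((2*j:ℝ)-1)/2^k ≤ t ∧ t < (2*j:ℝ)/2^k then -((2:ℝ) ^ (((k:ℝ)-1)/2))
  else 0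

/-- The transformation `φ_h^{(i)}` interchanging `Δ_{h+1}^{(4i-2)}` and `Δ_{h+1}^{(4i-1)}`. -/
noncomputable def phi (h i : ℕ) (t : ℝ) : ℝ :=
  if ((4*i:ℝ)-3)/2^(h+1) ≤ t ∧ t < ((4*i:ℝ)-2)/2^(h+1) then t + 1/2^(h+1)
  else if ((4*i:ℝ)-2)/2^(h+1) ≤ t ∧ t < ((4*i:ℝ)-1)/2^(h+1) then t - 1/2^(h+1)
  else t

private lemma dle {x y c : ℝ} (hc : 0 < c) (hxy : x ≤ y) : x / c ≤ y / c := by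
  gcongr

private lemma haar_zero_left (k j : ℕ) (u : ℝ) (h : u < ((2*j:ℝ)-2)/2^k) :
    haar k j u = 0 := by
  have h0 : (0:ℝ) < 2^k := by positivity
  have l1 : ((2*j:ℝ)-2)/2^k ≤ ((2*j:ℝ)-1)/2^k := dle h0 (by linarith)
  unfold haar
  split_ifs with c1 c2
  · exact absurd c1.1 (by linarith)
  · exact absurd c2.1 (by linarith)
  · rfl

private lemma haar_zero_right (k j : ℕ) (u : ℝ) (h : (2*j:ℝ)/2^k ≤ u) :
    haar k j u = 0 := by
  have h0 : (0:ℝ) < 2^k := by positivity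
  have l1 : ((2*j:ℝ)-1)/2^k ≤ (2*j:ℝ)/2^k := dle h0 (by linarith)
  unfold haar
  split_ifs with c1 c2
  · exact absurd c1.2 (by linarith)
  · exact absurd c2.2 (by linarith)
  · rfl

/-- `haar k j` is constant on dyadic intervals of rank `n ≥ k`. -/
private lemma haar_eq_on (k n j : ℕ) (hk : k ≤ n) (q : ℤ) (u v : ℝ)
    (hu1 : (q:ℝ)/2^n ≤ u) (hu2 : u < ((q:ℝ)+1)/2^n)
    (hv1 : (q:ℝ)/2^n ≤ v) (hv2 : v < ((q:ℝ)+1)/2^n) :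
    haar k j u = haar k j v := by
  have hn : (0:ℝ) < 2^n := by positivity
  have h2 : (2:ℝ)^n = 2^k * 2^(n-k) := by rw [← pow_add, Nat.add_sub_cancel' hk]
  have e : ∀ m : ℤ, (m:ℝ)/2^k = ((m * 2^(n-k) : ℤ):ℝ)/2^n := by
    intro m
    push_cast
    rw [h2, mul_comm ((2:ℝ)^k), ← div_div, mul_div_cancel_right₀]
    positivity
  have key : ∀ (p : ℤ) (w : ℝ), (q:ℝ)/2^n ≤ w → w < ((q:ℝ)+1)/2^n →
      ((p:ℝ)/2^n ≤ w ↔ p ≤ q) := by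
    intro p w hw1 hw2
    constructor
    · intro hle
      by_contra hpq
      push_neg at hpq
      have hq1 : (q:ℝ)+1 ≤ (p:ℝ) := by exact_mod_cast hpq
      have := dle hn hq1
      linarith
    · intro hpqle
      have hq1 : (p:ℝ) ≤ (q:ℝ) := by exact_mod_cast hpqle
      have := dle hn hq1
      linarith
  have cmp : ∀ m : ℤ, ((m:ℝ)/2^k ≤ u ↔ (m:ℝ)/2^k ≤ v) := by
    intro m
    rw [e m, key _ u hu1 hu2, key _ v hv1 hv2]
  have r1 : ((2*j:ℝ)-2) = ((2*(j:ℤ)-2 : ℤ):ℝ) := by push_cast; ring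
  have r2 : ((2*j:ℝ)-1) = ((2*(j:ℤ)-1 : ℤ):ℝ) := by push_cast; ring
  have r3 : (2*j:ℝ) = ((2*(j:ℤ) : ℤ):ℝ) := by push_cast; ring
  have i1 : (((2*j:ℝ)-2)/2^k ≤ u) ↔ (((2*j:ℝ)-2)/2^k ≤ v) := by rw [r1]; exact cmp _
  have i2 : (((2*j:ℝ)-1)/2^k ≤ u) ↔ (((2*j:ℝ)-1)/2^k ≤ v) := by rw [r2]; exact cmp _
  have i3 : ((2*j:ℝ)/2^k ≤ u) ↔ ((2*j:ℝ)/2^k ≤ v) := by rw [r3]; exact cmp _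
  have i2' : (u < ((2*j:ℝ)-1)/2^k) ↔ (v < ((2*j:ℝ)-1)/2^k) := by
    rw [← not_le, ← not_le, i2]
  have i3' : (u < (2*j:ℝ)/2^k) ↔ (v < (2*j:ℝ)/2^k) := by
    rw [← not_le, ← not_le, i3]
  unfold haar
  simp only [i1, i2, i2', i3']

/-- If `k < h`, or `k = h` and `j ≠ i`, then `χ_k^{(j)} ∘ φ_h^{(i)} = χ_k^{(j)}`. -/
theorem haar_comp_phi_low (k j h i : ℕ) (hk : 1 ≤ k) (hj : 1 ≤ j) (hj2 : j ≤ 2^(k-1))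
    (hh : 1 ≤ h) (hi : 1 ≤ i) (hi2 : i ≤ 2^(h-1))
    (hcond : k < h ∨ (k = h ∧ j ≠ i)) :
    ∀ t ∈ Ico (0:ℝ) 1, haar k j (phi h i t) = haar k j t := by
  intro t _
  have p1 : (0:ℝ) < 2^(h+1) := by positivity
  have p0 : (0:ℝ) < 2^(h-1) := by positivity
  have ph : (0:ℝ) < 2^h := by positivity
  have hd : (0:ℝ) < 1/2^(h+1) := by positivity
  have e1 : (2:ℝ)^(h+1) = 2 * 2^h := by rw [pow_succ]; ring
  have e2 : (2:ℝ)^(h+1) = 4 * 2^(h-1) := by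
    rw [show h+1 = (h-1)+2 from by omega, pow_add]; ring
  have cv : ∀ x : ℝ, x / 2^(h-1) = (4*x) / 2^(h+1) := by
    intro x; rw [e2]; ring
  have cvh : ∀ x : ℝ, x / 2^h = (2*x) / 2^(h+1) := by
    intro x; rw [e1]; ring
  unfold phi
  split_ifs with h1 h2
  · -- t ∈ Δ_{h+1}^{(4i-2)}, phi t = t + 1/2^{h+1}
    obtain ⟨ha, hb⟩ := h1
    rcases hcond with hkh | ⟨hkh, hji⟩
    · -- k < h : both points in [(i-1)/2^{h-1}, i/2^{h-1})
      apply haar_eq_on k (h-1) j (by omega) ((i:ℤ)-1) <;> push_cast <;> rw [cv]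
      · have l1 : (4*((i:ℝ)-1))/2^(h+1) ≤ ((4*i:ℝ)-3)/2^(h+1) := dle p1 (by linarith)
        linarith
      · have s1 : ((4*i:ℝ)-2)/2^(h+1) + 1/2^(h+1) = ((4*i:ℝ)-1)/2^(h+1) := by ring
        have l2 : ((4*i:ℝ)-1)/2^(h+1) ≤ (4*((i:ℝ)-1+1))/2^(h+1) := dle p1 (by linarith)
        linarith
      · have l1 : (4*((i:ℝ)-1))/2^(h+1) ≤ ((4*i:ℝ)-3)/2^(h+1) := dle p1 (by linarith)
        linarith
      · have l2 : ((4*i:ℝ)-2)/2^(h+1) ≤ (4*((i:ℝ)-1+1))/2^(h+1) := dle p1 (by linarith)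
        linarith
    · -- k = h, j ≠ i
      subst hkh
      rcases lt_or_gt_of_ne hji with hji | hji
      · -- j < i : haar vanishes to the right of its support
        have hji' : (j:ℝ) + 1 ≤ (i:ℝ) := by exact_mod_cast hji
        have key : (2*j:ℝ)/2^k ≤ ((4*i:ℝ)-3)/2^(k+1) := by
          rw [cvh]
          exact dle p1 (by linarith)
        rw [haar_zero_right k j _ (by linarith), haar_zero_right k j _ (by linarith)]
      · -- j > i : haar vanishes to the left of its support
        have hji' : (i:ℝ) + 1 ≤ (j:ℝ) := by exact_mod_cast hji
        have key : ((4*i:ℝ))/2^(k+1) ≤ ((2*j:ℝ)-2)/2^k := by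
          rw [cvh]
          exact dle p1 (by linarith)
        have s1 : ((4*i:ℝ)-2)/2^(k+1) + 1/2^(k+1) = ((4*i:ℝ)-1)/2^(k+1) := by ring
        have l3 : ((4*i:ℝ)-1)/2^(k+1) ≤ ((4*i:ℝ))/2^(k+1) := dle p1 (by linarith)
        have l4 : ((4*i:ℝ)-2)/2^(k+1) ≤ ((4*i:ℝ))/2^(k+1) := dle p1 (by linarith)
        rw [haar_zero_left k j _ (by linarith), haar_zero_left k j _ (by linarith)]
  · -- t ∈ Δ_{h+1}^{(4i-1)}, phi t = t - 1/2^{h+1}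
    obtain ⟨ha, hb⟩ := h2
    rcases hcond with hkh | ⟨hkh, hji⟩
    · apply haar_eq_on k (h-1) j (by omega) ((i:ℤ)-1) <;> push_cast <;> rw [cv]
      · have s1 : ((4*i:ℝ)-2)/2^(h+1) - 1/2^(h+1) = ((4*i:ℝ)-3)/2^(h+1) := by ring
        have l1 : (4*((i:ℝ)-1))/2^(h+1) ≤ ((4*i:ℝ)-3)/2^(h+1) := dle p1 (by linarith)
        linarith
      · have l2 : ((4*i:ℝ)-1)/2^(h+1) ≤ (4*((i:ℝ)-1+1))/2^(h+1) := dle p1 (by linarith)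
        linarith
      · have l1 : (4*((i:ℝ)-1))/2^(h+1) ≤ ((4*i:ℝ)-2)/2^(h+1) := dle p1 (by linarith)
        linarith
      · have l2 : ((4*i:ℝ)-1)/2^(h+1) ≤ (4*((i:ℝ)-1+1))/2^(h+1) := dle p1 (by linarith)
        linarith
    · subst hkh
      rcases lt_or_gt_of_ne hji with hji | hji
      · have hji' : (j:ℝ) + 1 ≤ (i:ℝ) := by exact_mod_cast hji
        have key : (2*j:ℝ)/2^k ≤ ((4*i:ℝ)-3)/2^(k+1) := by
          rw [cvh]
          exact dle p1 (by linarith)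
        have s1 : ((4*i:ℝ)-2)/2^(k+1) - 1/2^(k+1) = ((4*i:ℝ)-3)/2^(k+1) := by ring
        rw [haar_zero_right k j _ (by linarith), haar_zero_right k j _ (by linarith)]
      · have hji' : (i:ℝ) + 1 ≤ (j:ℝ) := by exact_mod_cast hji
        have key : ((4*i:ℝ))/2^(k+1) ≤ ((2*j:ℝ)-2)/2^k := by
          rw [cvh]
          exact dle p1 (by linarith)
        have l3 : ((4*i:ℝ)-1)/2^(k+1) ≤ ((4*i:ℝ))/2^(k+1) := dle p1 (by linarith)
        rw [haar_zero_left k j _ (by linarith), haar_zero_left k j _ (by linarith)]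
  · rfl
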